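/- GT_X(t) = 0 for all t ∈ D¹_X if and only if X has an exponential distribution (i.e., H_X(t) = λt for some λ > 0). -/

import Mathlib

open MeasureTheory intervalIntegral

noncomputable def GTindex (H : ℝ → ℝ) (t : ℝ) : ℝ :=
  1 - 2 / (t * H t) * ∫ u in (0:ℝ)..t, H u

/-- `GT_X(t) = 0` for all `t ∈ D¹_X = (0,∞)` iff `X` is exponential, i.e.
`H_X(t) = λ t` for some `λ > 0`. -/
theorem stmt3 (H : ℝ → ℝ) (hH0 : H 0 = 0) (hHcont : Continuous H)
    (hHpos : ∀ t, 0 < t → 0 < H t) :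
    (∀ t, 0 < t → GTindex H t = 0) ↔ ∃ l : ℝ, 0 < l ∧ ∀ t, 0 ≤ t → H t = l * t := by
  set F : ℝ → ℝ := fun t => ∫ u in (0:ℝ)..t, H u with hF
  have hFderiv : ∀ x : ℝ, HasDerivAt F (H x) x := fun x =>
    intervalIntegral.integral_hasDerivAt_right (hHcont.intervalIntegrable 0 x)
      (hHcont.stronglyMeasurableAtFilter _ _) hHcont.continuousAt
  constructor
  · intro hGT
    -- from GT = 0: 2 * F t = t * H t for t > 0
    have key : ∀ t, 0 < t → 2 * F t = t * H t := by
      intro t ht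
      have h := hGT t ht
      have hne : t * H t ≠ 0 := by exact ne_of_gt (mul_pos ht (hHpos t ht))
      unfold GTindex at h
      have : 2 / (t * H t) * F t = 1 := by linarith
      field_simp at this
      rw [div_eq_iff (hHpos t ht).ne'] at this; linarith
    -- G = F / t^2 has zero derivative on Ioi 0
    set G : ℝ → ℝ := fun t => F t / t ^ 2 with hG
    have hGderiv : ∀ x ∈ Set.Ioi (0:ℝ), HasDerivWithinAt G 0 (Set.Ioi (0:ℝ)) x := by
      intro x hx
      have hx0 : (0:ℝ) < x := hx
      have h1 : HasDerivAt (fun t : ℝ => t ^ 2) (2 * x) x := by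
        simpa using (hasDerivAt_pow 2 x)
      have h2 : HasDerivAt G ((H x * x ^ 2 - F x * (2 * x)) / (x ^ 2) ^ 2) x :=
        (hFderiv x).div h1 (by positivity)
      have heq : (H x * x ^ 2 - F x * (2 * x)) / (x ^ 2) ^ 2 = 0 := by
        have := key x hx0
        have : H x * x ^ 2 - F x * (2 * x) = 0 := by nlinarith
        rw [this]; simp
      rw [heq] at h2
      exact h2.hasDerivWithinAt
    have hconst : ∀ x ∈ Set.Ioi (0:ℝ), ∀ y ∈ Set.Ioi (0:ℝ), G x = G y := by
      intro x hx y hy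
      have := (convex_Ioi (0:ℝ)).norm_image_sub_le_of_norm_hasDerivWithin_le
        (f' := fun _ => 0) (C := 0) hGderiv (fun x _ => by simp) hy hx
      simp at this
      have : G x - G y = 0 := by
        have h0 : |G x - G y| ≤ 0 := by simpa [Real.norm_eq_abs] using this
        have := abs_nonneg (G x - G y)
        linarith [le_antisymm h0 this ▸ (abs_eq_zero.mp (le_antisymm h0 this))]
      linarith
    set c : ℝ := G 1 with hc
    refine ⟨2 * c, ?_, ?_⟩
    · have h1 : 2 * F 1 = 1 * H 1 := key 1 one_pos
      have : c = F 1 := by simp [hc, hG]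
      have hH1 : 0 < H 1 := hHpos 1 one_pos
      nlinarith
    · intro t ht
      rcases eq_or_lt_of_le ht with h | h
      · simp [← h, hH0]
      · have hGx : G t = c := hconst t h 1 (by norm_num)
        have hFt : F t = c * t ^ 2 := by
          have ht2 : (t:ℝ) ^ 2 ≠ 0 := by positivity
          change F t / t ^ 2 = c at hGx; rw [div_eq_iff ht2] at hGx
          linarith [hGx]
        have := key t h
        have ht0 : t ≠ 0 := ne_of_gt h
        nlinarith
  · intro ⟨l, hl, hlt⟩ t ht
    have hint : F t = l * (t ^ 2 / 2) := by
      show (∫ u in (0:ℝ)..t, H u) = l * (t ^ 2 / 2)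
      rw [intervalIntegral.integral_congr (g := fun u => l * u)
        (fun u hu => hlt u (by
          rcases hu with ⟨h1, h2⟩
          simp only [min_def, max_def] at h1
          split_ifs at h1 <;> linarith [le_of_lt ht]))]
      rw [intervalIntegral.integral_const_mul]
      simp [integral_id]
    unfold GTindex
    have hFt : (∫ u in (0:ℝ)..t, H u) = l * (t ^ 2 / 2) := hint
    rw [hFt, hlt t ht.le]
    have : t * (l * t) ≠ 0 := by positivity
    field_simp
    ring
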